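/- The condition ζ̂ < R₀·c_m, where ζ̂ = m(A(c_e) − A(c_m))/ϑ and c_m solves R₀ϑ c_m ρ(c_m²) = m, holds if and only if m > R₀·ϑ·c_l·ρ(c_l²), where c_l ∈ (0, c_e) is the unique root of ρ(c_l²)(A(c_e) − A(c_l)) = 1. -/

import Mathlib

open Set

/-- Bernoulli density as a function of `t = q²`. -/
noncomputable def rho (γ t : ℝ) : ℝ := (1 - (γ - 1) / 2 * t) ^ ((1 : ℝ) / (γ - 1))

/-- Critical (sonic) speed. -/
noncomputable def cstar (γ : ℝ) : ℝ := Real.sqrt (2 / (γ + 1))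

/-- `A(q) = ∫_{c_*}^q (ρ(s²) + 2s²ρ'(s²))/(s ρ²(s²)) ds`. -/
noncomputable def Afun (γ q : ℝ) : ℝ :=
  ∫ s in (cstar γ)..q,
    (rho γ (s ^ 2) + 2 * s ^ 2 * deriv (rho γ) (s ^ 2)) / (s * (rho γ (s ^ 2)) ^ 2)

lemma rho_pos {γ t : ℝ} (h : 0 < 1 - (γ - 1) / 2 * t) : 0 < rho γ t :=
  Real.rpow_pos_of_pos h _

lemma rho_lt {γ t₁ t₂ : ℝ} (hγ : 1 < γ) (h : 0 < 1 - (γ - 1) / 2 * t₂) (ht : t₁ < t₂) :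
    rho γ t₂ < rho γ t₁ := by
  apply Real.rpow_lt_rpow (le_of_lt h) _ (div_pos one_pos (by linarith))
  nlinarith

lemma hasDerivAt_rho {γ t : ℝ} (hγ : 1 < γ) (h : 0 < 1 - (γ - 1) / 2 * t) :
    HasDerivAt (rho γ)
      (-(1 / 2) * (1 - (γ - 1) / 2 * t) ^ ((1 : ℝ) / (γ - 1) - 1)) t := by
  have h1 : HasDerivAt (fun t : ℝ => 1 - (γ - 1) / 2 * t) (-((γ - 1) / 2)) t := by
    simpa using ((hasDerivAt_id t).const_mul ((γ - 1) / 2)).const_sub 1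
  have h2 := (Real.hasDerivAt_rpow_const (p := (1 : ℝ) / (γ - 1))
    (Or.inl (ne_of_gt h))).comp t h1
  refine h2.congr_deriv ?_
  have : γ - 1 ≠ 0 := by linarith
  field_simp

lemma deriv_rho {γ t : ℝ} (hγ : 1 < γ) (h : 0 < 1 - (γ - 1) / 2 * t) :
    deriv (rho γ) t = -(1 / 2) * (1 - (γ - 1) / 2 * t) ^ ((1 : ℝ) / (γ - 1) - 1) :=
  (hasDerivAt_rho hγ h).deriv

noncomputable def gfun (γ s : ℝ) : ℝ :=
  (1 - (γ + 1) / 2 * s ^ 2) / (s * (1 - (γ - 1) / 2 * s ^ 2) ^ (γ / (γ - 1)))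

lemma integrand_eq {γ s : ℝ} (hγ : 1 < γ) (hs : 0 < s)
    (hB : 0 < 1 - (γ - 1) / 2 * s ^ 2) :
    (rho γ (s ^ 2) + 2 * s ^ 2 * deriv (rho γ) (s ^ 2)) / (s * (rho γ (s ^ 2)) ^ 2)
      = gfun γ s := by
  set Bv := 1 - (γ - 1) / 2 * s ^ 2 with hBv
  have hne : γ - 1 ≠ 0 := by linarith
  rw [deriv_rho hγ hB]
  unfold rho gfun
  rw [← hBv]
  have e2 : (Bv ^ ((1:ℝ)/(γ-1)))^2 = Bv ^ ((1:ℝ)/(γ-1) - 1) * Bv ^ (γ/(γ-1)) := by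
    rw [← Real.rpow_natCast (Bv ^ ((1:ℝ)/(γ-1))) 2, ← Real.rpow_mul (le_of_lt hB),
      ← Real.rpow_add hB]
    congr 1
    push_cast
    field_simp
    ring
  have e1 : Bv ^ ((1:ℝ)/(γ-1)) = Bv ^ ((1:ℝ)/(γ-1) - 1) * Bv := by
    rw [← Real.rpow_add_one (ne_of_gt hB)]; ring_nf
  rw [e2, e1]
  have hpow : (0:ℝ) < Bv ^ ((1:ℝ)/(γ-1) - 1) := Real.rpow_pos_of_pos hB _
  have hpow2 : (0:ℝ) < Bv ^ (γ/(γ-1)) := Real.rpow_pos_of_pos hB _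
  rw [div_eq_div_iff (by positivity) (by positivity), hBv]
  ring

lemma cstar_sq {γ : ℝ} (hγ : 1 < γ) : (cstar γ) ^ 2 = 2 / (γ + 1) := by
  rw [cstar, Real.sq_sqrt (by positivity)]

lemma cstar_pos {γ : ℝ} (hγ : 1 < γ) : 0 < cstar γ :=
  Real.sqrt_pos.mpr (by positivity)

lemma B_pos_of_le_cstar {γ s : ℝ} (hγ : 1 < γ) (hs : s ≤ cstar γ) (hs0 : 0 ≤ s) :
    0 < 1 - (γ - 1) / 2 * s ^ 2 := by
  have h2 : s ^ 2 ≤ 2 / (γ + 1) := by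
    rw [← cstar_sq hγ]
    exact pow_le_pow_left₀ hs0 hs 2
  have hγ1 : (0:ℝ) < γ + 1 := by linarith
  have h4 : (γ - 1) / 2 * s ^ 2 ≤ (γ - 1) / 2 * (2 / (γ + 1)) :=
    mul_le_mul_of_nonneg_left h2 (by linarith)
  have h3 : (γ - 1) / 2 * (2 / (γ + 1)) < 1 := by
    rw [div_mul_div_comm, div_lt_one (by positivity)]
    linarith
  linarith

lemma g_pos {γ s : ℝ} (hγ : 1 < γ) (hs : 0 < s) (hs' : s < cstar γ) : 0 < gfun γ s := by
  have h2 : s ^ 2 < 2 / (γ + 1) := by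
    rw [← cstar_sq hγ]
    exact pow_lt_pow_left₀ hs' (le_of_lt hs) (by norm_num)
  have hγ1 : (0:ℝ) < γ + 1 := by linarith
  have hnum : 0 < 1 - (γ + 1) / 2 * s ^ 2 := by
    have h4 : (γ + 1) / 2 * s ^ 2 < (γ + 1) / 2 * (2 / (γ + 1)) :=
      mul_lt_mul_of_pos_left h2 (by positivity)
    have h5 : (γ + 1) / 2 * (2 / (γ + 1)) = 1 := by field_simp
    linarith
  have hB : 0 < 1 - (γ - 1) / 2 * s ^ 2 :=
    B_pos_of_le_cstar hγ (le_of_lt hs') (le_of_lt hs)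
  have : (0:ℝ) < (1 - (γ - 1) / 2 * s ^ 2) ^ (γ / (γ - 1)) := Real.rpow_pos_of_pos hB _
  exact div_pos hnum (by positivity)

lemma g_contOn {γ u : ℝ} (hγ : 1 < γ) (hu : 0 < u) :
    ContinuousOn (gfun γ) (Icc u (cstar γ)) := by
  apply ContinuousOn.div
  · fun_prop
  · apply ContinuousOn.mul continuousOn_id
    apply ContinuousOn.rpow_const
    · fun_prop
    · intro x hx
      exact Or.inl (ne_of_gt (B_pos_of_le_cstar hγ hx.2 (le_trans (le_of_lt hu) hx.1)))
  · intro x hx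
    have hx0 : 0 < x := lt_of_lt_of_le hu hx.1
    have hB := B_pos_of_le_cstar hγ hx.2 (le_of_lt hx0)
    have : (0:ℝ) < (1 - (γ - 1) / 2 * x ^ 2) ^ (γ / (γ - 1)) := Real.rpow_pos_of_pos hB _
    positivity

lemma integrand_eq_on {γ u : ℝ} (hγ : 1 < γ) (hu : 0 < u) :
    ∀ s ∈ Icc u (cstar γ),
      (rho γ (s ^ 2) + 2 * s ^ 2 * deriv (rho γ) (s ^ 2)) / (s * (rho γ (s ^ 2)) ^ 2)
        = gfun γ s := fun s hs =>
  integrand_eq hγ (lt_of_lt_of_le hu hs.1)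
    (B_pos_of_le_cstar hγ hs.2 (le_trans (le_of_lt hu) hs.1))

lemma f_contOn {γ u : ℝ} (hγ : 1 < γ) (hu : 0 < u) :
    ContinuousOn (fun s => (rho γ (s ^ 2) + 2 * s ^ 2 * deriv (rho γ) (s ^ 2)) /
      (s * (rho γ (s ^ 2)) ^ 2)) (Icc u (cstar γ)) :=
  (g_contOn hγ hu).congr (integrand_eq_on hγ hu)

lemma Afun_sub {γ u v : ℝ} (hγ : 1 < γ) (hu : 0 < u) (huv : u ≤ v) (hv : v ≤ cstar γ) :
    Afun γ v - Afun γ u = ∫ s in u..v, gfun γ s := by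
  have hcont := f_contOn hγ hu (γ := γ)
  have husub : uIcc (cstar γ) u ⊆ Icc u (cstar γ) := by
    rw [uIcc_of_ge (le_trans huv hv)]
  have hvsub : uIcc (cstar γ) v ⊆ Icc u (cstar γ) := by
    rw [uIcc_of_ge hv]; exact Icc_subset_Icc huv le_rfl
  have hi1 : IntervalIntegrable _ MeasureTheory.volume (cstar γ) v :=
    (hcont.mono hvsub).intervalIntegrable
  have hi2 : IntervalIntegrable _ MeasureTheory.volume (cstar γ) u :=
    (hcont.mono husub).intervalIntegrable
  rw [Afun, Afun, intervalIntegral.integral_interval_sub_left hi1 hi2]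
  apply intervalIntegral.integral_congr
  intro s hs
  apply integrand_eq_on hγ hu
  have : uIcc u v ⊆ Icc u (cstar γ) := by
    rw [uIcc_of_le huv]; exact Icc_subset_Icc le_rfl hv
  exact this hs

lemma Afun_sub_pos {γ u v : ℝ} (hγ : 1 < γ) (hu : 0 < u) (huv : u < v) (hv : v ≤ cstar γ) :
    0 < Afun γ v - Afun γ u := by
  rw [Afun_sub hγ hu (le_of_lt huv) hv]
  apply intervalIntegral.intervalIntegral_pos_of_pos_on
  · apply ((g_contOn hγ hu).mono _).intervalIntegrable
    rw [uIcc_of_le (le_of_lt huv)]; exact Icc_subset_Icc le_rfl hv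
  · intro x hx
    exact g_pos hγ (lt_trans hu hx.1) (lt_of_lt_of_le hx.2 hv)
  · exact huv

lemma Afun_sub_nonneg {γ u v : ℝ} (hγ : 1 < γ) (hu : 0 < u) (huv : u ≤ v) (hv : v ≤ cstar γ) :
    0 ≤ Afun γ v - Afun γ u := by
  rcases eq_or_lt_of_le huv with h | h
  · rw [h]; simp
  · exact le_of_lt (Afun_sub_pos hγ hu h hv)


lemma hasDerivAt_G {γ x : ℝ} (hγ : 1 < γ) (hB : 0 < 1 - (γ - 1) / 2 * x ^ 2) :
    HasDerivAt (fun s => s * rho γ (s ^ 2))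
      (rho γ (x ^ 2) + x * (-(1 / 2) * (1 - (γ - 1) / 2 * x ^ 2) ^ ((1:ℝ)/(γ-1) - 1) * (2 * x)))
      x := by
  have hu : HasDerivAt (fun s : ℝ => 1 - (γ - 1) / 2 * s ^ 2) (-((γ - 1) / 2 * (2 * x))) x := by
    simpa using ((hasDerivAt_pow 2 x).const_mul ((γ - 1) / 2)).const_sub 1
  have hr : HasDerivAt (fun s => rho γ (s ^ 2))
      (-((γ - 1) / 2 * (2 * x)) * ((1:ℝ)/(γ-1)) *
        (1 - (γ - 1) / 2 * x ^ 2) ^ ((1:ℝ)/(γ-1) - 1)) x := by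
    have h2 := hu.rpow_const (p := (1:ℝ)/(γ-1)) (Or.inl (ne_of_gt hB))
    simpa [rho] using h2
  have h := (hasDerivAt_id x).mul hr
  simp only [id] at h
  refine h.congr_deriv ?_
  have hne : γ - 1 ≠ 0 := by linarith
  field_simp

lemma Gderiv_pos {γ x : ℝ} (hγ : 1 < γ) (hx : 0 < x) (hx' : x < cstar γ) :
    0 < rho γ (x ^ 2) +
      x * (-(1 / 2) * (1 - (γ - 1) / 2 * x ^ 2) ^ ((1:ℝ)/(γ-1) - 1) * (2 * x)) := by
  have hB : 0 < 1 - (γ - 1) / 2 * x ^ 2 :=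
    B_pos_of_le_cstar hγ (le_of_lt hx') (le_of_lt hx)
  have h2 : x ^ 2 < 2 / (γ + 1) := by
    rw [← cstar_sq hγ]
    exact pow_lt_pow_left₀ hx' (le_of_lt hx) (by norm_num)
  have hγ1 : (0:ℝ) < γ + 1 := by linarith
  have hnum : 0 < 1 - (γ + 1) / 2 * x ^ 2 := by
    have h4 : (γ + 1) / 2 * x ^ 2 < (γ + 1) / 2 * (2 / (γ + 1)) :=
      mul_lt_mul_of_pos_left h2 (by positivity)
    have h5 : (γ + 1) / 2 * (2 / (γ + 1)) = 1 := by field_simp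
    linarith
  have hpow : (0:ℝ) < (1 - (γ - 1) / 2 * x ^ 2) ^ ((1:ℝ)/(γ-1) - 1) :=
    Real.rpow_pos_of_pos hB _
  have e1 : rho γ (x ^ 2) =
      (1 - (γ - 1) / 2 * x ^ 2) ^ ((1:ℝ)/(γ-1) - 1) * (1 - (γ - 1) / 2 * x ^ 2) := by
    rw [rho, ← Real.rpow_add_one (ne_of_gt hB)]; ring_nf
  rw [e1]
  nlinarith [mul_pos hpow hnum]

lemma Gmono {γ : ℝ} (hγ : 1 < γ) :
    StrictMonoOn (fun s => s * rho γ (s ^ 2)) (Icc 0 (cstar γ)) := by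
  apply StrictMonoOn.mono (s := Icc 0 (cstar γ)) _ (le_refl _)
  apply strictMonoOn_of_deriv_pos (convex_Icc _ _)
  · unfold rho
    apply ContinuousOn.mul continuousOn_id
    apply ContinuousOn.rpow_const
    · fun_prop
    · intro x hx
      exact Or.inl (ne_of_gt (B_pos_of_le_cstar hγ hx.2 hx.1))
  · intro x hx
    rw [interior_Icc] at hx
    have hB : 0 < 1 - (γ - 1) / 2 * x ^ 2 :=
      B_pos_of_le_cstar hγ (le_of_lt hx.2) (le_of_lt hx.1)
    rw [(hasDerivAt_G hγ hB).deriv]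
    exact Gderiv_pos hγ hx.1 hx.2

lemma Fanti {γ a b ce : ℝ} (hγ : 1 < γ) (ha : 0 < a) (hab : a < b) (hbe : b ≤ ce)
    (hce : ce < cstar γ) :
    rho γ (b ^ 2) * (Afun γ ce - Afun γ b) < rho γ (a ^ 2) * (Afun γ ce - Afun γ a) := by
  have hb0 : 0 < b := lt_trans ha hab
  have hbc : b ≤ cstar γ := le_trans hbe (le_of_lt hce)
  have hAab : 0 < Afun γ b - Afun γ a := Afun_sub_pos hγ ha hab hbc
  have hAeb : 0 ≤ Afun γ ce - Afun γ b := Afun_sub_nonneg hγ hb0 hbe (le_of_lt hce)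
  have hBb : 0 < 1 - (γ - 1) / 2 * b ^ 2 := B_pos_of_le_cstar hγ hbc (le_of_lt hb0)
  have hρa : 0 < rho γ (a ^ 2) := rho_pos (by nlinarith)
  have hρab : rho γ (b ^ 2) < rho γ (a ^ 2) :=
    rho_lt hγ hBb (by nlinarith)
  nlinarith [mul_pos hρa hAab, mul_nonneg (le_of_lt (sub_pos.mpr hρab)) hAeb]


/-- `ζ̂ < R₀ c_m` holds if and only if `m > R₀ϑ c_l ρ(c_l²)`, where
`ζ̂ = m(A(c_e) − A(c_m))/ϑ`, `c_m` solves `R₀ϑ c_m ρ(c_m²) = m`, and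
`c_l ∈ (0, c_e)` is the unique root of `ρ(c_l²)(A(c_e) − A(c_l)) = 1`. -/
theorem stmt_9 (γ R₀ ϑ c_e m c_m c_l : ℝ) (hγ : 1 < γ) (hR₀ : 0 < R₀)
    (hϑ : ϑ ∈ Ioo (0 : ℝ) (Real.pi / 2))
    (hce : c_e ∈ Ioo (0 : ℝ) (cstar γ))
    (hm : 0 < m) (hm' : m < R₀ * ϑ * c_e * rho γ (c_e ^ 2))
    (hcm : c_m ∈ Ioo (0 : ℝ) c_e ∧ R₀ * ϑ * c_m * rho γ (c_m ^ 2) = m)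
    (hcl : c_l ∈ Ioo (0 : ℝ) c_e ∧ rho γ (c_l ^ 2) * (Afun γ c_e - Afun γ c_l) = 1) :
    m * (Afun γ c_e - Afun γ c_m) / ϑ < R₀ * c_m ↔
      R₀ * ϑ * c_l * rho γ (c_l ^ 2) < m := by
  obtain ⟨⟨hcm0, hcme⟩, hcmEq⟩ := hcm
  obtain ⟨⟨hcl0, hcle⟩, hclEq⟩ := hcl
  obtain ⟨hϑ0, -⟩ := hϑ
  obtain ⟨hce0, hceU⟩ := hce
  have hP : 0 < R₀ * ϑ * c_m := by positivity
  have iff1 : m * (Afun γ c_e - Afun γ c_m) / ϑ < R₀ * c_m ↔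
      rho γ (c_m ^ 2) * (Afun γ c_e - Afun γ c_m) < 1 := by
    rw [div_lt_iff₀ hϑ0, ← hcmEq]
    constructor <;> intro h <;> nlinarith
  rw [iff1, ← hclEq]
  have hFiff : rho γ (c_m ^ 2) * (Afun γ c_e - Afun γ c_m) <
      rho γ (c_l ^ 2) * (Afun γ c_e - Afun γ c_l) ↔ c_l < c_m := by
    constructor
    · intro h
      by_contra h'
      push_neg at h'
      rcases eq_or_lt_of_le h' with h'' | h''
      · rw [h''] at h; exact lt_irrefl _ h
      · exact absurd (Fanti hγ hcm0 h'' (le_of_lt hcle) hceU) (not_lt.mpr (le_of_lt h))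
    · intro h
      exact Fanti hγ hcl0 h (le_of_lt hcme) hceU
  rw [hFiff]
  have hmemL : c_l ∈ Icc (0:ℝ) (cstar γ) :=
    ⟨le_of_lt hcl0, le_of_lt (lt_trans hcle hceU)⟩
  have hmemM : c_m ∈ Icc (0:ℝ) (cstar γ) :=
    ⟨le_of_lt hcm0, le_of_lt (lt_trans hcme hceU)⟩
  have hGiff : c_l < c_m ↔ c_l * rho γ (c_l ^ 2) < c_m * rho γ (c_m ^ 2) :=
    ((Gmono hγ).lt_iff_lt hmemL hmemM).symm
  rw [hGiff, ← hcmEq]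
  have hQ : 0 < R₀ * ϑ := by positivity
  constructor <;> intro h <;> nlinarith
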